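/- Let z_1,…,z_N be independent random points, each uniformly distributed on {0,1}^n. Then the expected quadratic discrepancy of the random N-tuple Z = (z_1,…,z_N) equals E[D^{L2}(Z)] = (n/(N·2^{n+1}))·C(2n,n). -/

import Mathlib

open Finset

private lemma sum_range_le_filter {M : Type*} [AddCommMonoid M] {a b : ℕ} (h : a ≤ b) (g : ℕ → M) :
    ∑ s ∈ range (a+1), g s = ∑ s ∈ range (b+1), if s ≤ a then g s else 0 := by
  rw [← Finset.sum_filter]
  congr 1
  ext s
  simp only [mem_filter, mem_range]
  omega

private lemma sum_Ico_filter {M : Type*} [AddCommMonoid M] {a b : ℕ} (g : ℕ → M) :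
    ∑ r ∈ Ico (a+1) (b+1), g r = ∑ r ∈ range (b+1), if a < r then g r else 0 := by
  rw [← Finset.sum_filter]
  congr 1
  ext r
  simp only [mem_filter, mem_range, mem_Ico]
  omega

private lemma telescope (m : ℕ) :
    2 * ∑ k ∈ range (m+1), ((m+1) - k) * ((2*(m+1)).choose k)
      = (m+1) * ((2*(m+1)).choose (m+1)) := by
  have hInt : (2:ℤ) * ∑ k ∈ range (m+1), ((((m+1) - k : ℕ)) : ℤ) * (((2*(m+1)).choose k : ℕ) : ℤ)
      = ((m+1 : ℕ) : ℤ) * (((2*(m+1)).choose (m+1) : ℕ) : ℤ) := by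
    set f : ℕ → ℤ := fun k => match k with
      | 0 => 0
      | j+1 => (2*(m+1) : ℤ) * (((2*m+1).choose j : ℕ) : ℤ) with hfdef
    have h0 : f 0 = 0 := rfl
    have hsucc : ∀ j, f (j+1) = (2*(m+1) : ℤ) * (((2*m+1).choose j : ℕ) : ℤ) := fun j => rfl
    have e : (2*m+1).succ = 2*(m+1) := by omega
    calc (2:ℤ) * ∑ k ∈ range (m+1), ((((m+1) - k : ℕ)) : ℤ) * (((2*(m+1)).choose k : ℕ) : ℤ)
        = ∑ k ∈ range (m+1), (f (k+1) - f k) := by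
          rw [Finset.mul_sum]
          refine Finset.sum_congr rfl ?_
          intro k hk
          have hkm : k ≤ m := by simpa [Nat.lt_succ_iff] using hk
          rcases k with _ | j
          · simp [hsucc, h0]
          · have hA : 2*(m+1) * ((2*m+1).choose j) = (2*(m+1)).choose (j+1) * (j+1) := by
              have h := Nat.add_one_mul_choose_eq (2*m+1) j
              rwa [show 2*m+1+1 = 2*(m+1) by omega] at h
            have hC : 2*(m+1) * ((2*m+1).choose (j+1))
                = (2*(m+1)).choose (j+1) * (2*(m+1) - (j+1)) := by
              have h1 := Nat.add_one_mul_choose_eq (2*m+1) (j+1)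
              rw [show 2*m+1+1 = 2*(m+1) by omega] at h1
              exact h1.trans (Nat.choose_succ_right_eq (2*(m+1)) (j+1))
            have hle1 : j+1 ≤ 2*(m+1) := by omega
            have hle2 : j+1 ≤ m+1 := by omega
            zify [hle1] at hC
            zify at hA
            rw [hsucc, hsucc, Nat.cast_sub hle2]
            push_cast
            linear_combination hA - hC
      _ = f (m+1) - f 0 := Finset.sum_range_sub f (m+1)
      _ = ((m+1 : ℕ) : ℤ) * (((2*(m+1)).choose (m+1) : ℕ) : ℤ) := by
          rw [hsucc, h0, sub_zero]
          have hp : (2*(m+1)).choose (m+1) = (2*m+1).choose m + (2*m+1).choose (m+1) := by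
            have h := Nat.choose_succ_succ (2*m+1) m
            rwa [e] at h
          have hs : (2*m+1).choose (m+1) = (2*m+1).choose m := by
            have h := Nat.choose_symm (n := 2*m+1) (k := m+1) (by omega)
            rw [show 2*m+1-(m+1) = m by omega] at h
            exact h.symm
          rw [hp, hs]
          push_cast
          ring
  exact_mod_cast hInt

/-- The central combinatorial identity: `2 Σ_t V_t W_t = n C(2n, n)`. -/
private lemma comb_main (n : ℕ) :
    2 * ∑ t ∈ range (n+1),
        (∑ s ∈ range (t+1), n.choose s) * (∑ r ∈ Ico (t+1) (n+1), n.choose r)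
      = n * ((2*n).choose n) := by
  have step1 : ∑ t ∈ range (n+1),
        (∑ s ∈ range (t+1), n.choose s) * (∑ r ∈ Ico (t+1) (n+1), n.choose r)
      = ∑ s ∈ range (n+1), ∑ r ∈ range (n+1), n.choose s * n.choose r * (r - s) := by
    have h1 : ∀ t ∈ range (n+1),
        (∑ s ∈ range (t+1), n.choose s) * (∑ r ∈ Ico (t+1) (n+1), n.choose r)
        = ∑ s ∈ range (n+1), ∑ r ∈ range (n+1),
            (if s ≤ t ∧ t < r then n.choose s * n.choose r else 0) := by
      intro t ht
      have ht' : t ≤ n := by simpa [Nat.lt_succ_iff] using ht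
      rw [sum_range_le_filter ht', sum_Ico_filter, Finset.sum_mul_sum]
      refine Finset.sum_congr rfl fun s _ => Finset.sum_congr rfl fun r _ => ?_
      split_ifs <;> simp_all
    rw [Finset.sum_congr rfl h1, Finset.sum_comm]
    refine Finset.sum_congr rfl fun s _ => ?_
    rw [Finset.sum_comm]
    refine Finset.sum_congr rfl fun r hr => ?_
    rw [← Finset.sum_filter]
    have hfil : (range (n+1)).filter (fun t => s ≤ t ∧ t < r) = Ico s r := by
      have hr' : r ≤ n := by simpa [Nat.lt_succ_iff] using hr
      ext t; simp only [mem_filter, mem_range, mem_Ico]; omega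
    rw [hfil, Finset.sum_const, Nat.card_Ico, smul_eq_mul]
    ring
  have swap : ∑ s ∈ range (n+1), ∑ r ∈ range (n+1), n.choose s * n.choose r * (r - s)
      = ∑ s ∈ range (n+1), ∑ r ∈ range (n+1), n.choose s * n.choose r * (s - r) := by
    rw [Finset.sum_comm]
    refine Finset.sum_congr rfl fun s _ => Finset.sum_congr rfl fun r _ => ?_
    ring
  have step23 : 2 * (∑ s ∈ range (n+1), ∑ r ∈ range (n+1), n.choose s * n.choose r * (r - s))
      = ∑ s ∈ range (n+1), ∑ r ∈ range (n+1),
          n.choose s * n.choose r * ((n - (s+r)) + ((s+r) - n)) := by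
    have habs : 2 * (∑ s ∈ range (n+1), ∑ r ∈ range (n+1), n.choose s * n.choose r * (r - s))
        = ∑ s ∈ range (n+1), ∑ r ∈ range (n+1), n.choose s * n.choose r * ((r - s) + (s - r)) := by
      rw [two_mul]
      nth_rewrite 2 [swap]
      rw [← Finset.sum_add_distrib]
      refine Finset.sum_congr rfl fun s _ => ?_
      rw [← Finset.sum_add_distrib]
      refine Finset.sum_congr rfl fun r _ => ?_
      ring
    rw [habs]
    refine Finset.sum_congr rfl fun s hs => ?_
    have hs' : s ≤ n := by simpa [Nat.lt_succ_iff] using hs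
    rw [← Finset.sum_range_reflect (fun r => n.choose s * n.choose r * ((r - s) + (s - r))) (n+1)]
    refine Finset.sum_congr rfl fun r hr => ?_
    have hr' : r ≤ n := by simpa [Nat.lt_succ_iff] using hr
    rw [show n + 1 - 1 - r = n - r by omega, Nat.choose_symm hr']
    congr 1
    omega
  have step4 : ∑ s ∈ range (n+1), ∑ r ∈ range (n+1),
          n.choose s * n.choose r * ((n - (s+r)) + ((s+r) - n))
      = ∑ k ∈ range (2*n+1), (2*n).choose k * ((n - k) + (k - n)) := by
    have hsub : range (n+1) ⊆ range (2*n+1) := Finset.range_subset_range.mpr (by omega)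
    have lhs_eq : ∑ s ∈ range (n+1), ∑ r ∈ range (n+1),
          n.choose s * n.choose r * ((n - (s+r)) + ((s+r) - n))
        = ∑ s ∈ range (2*n+1), ∑ r ∈ range (2*n+1),
          n.choose s * n.choose r * ((n - (s+r)) + ((s+r) - n)) := by
      calc ∑ s ∈ range (n+1), ∑ r ∈ range (n+1),
              n.choose s * n.choose r * ((n - (s+r)) + ((s+r) - n))
          = ∑ s ∈ range (n+1), ∑ r ∈ range (2*n+1),
              n.choose s * n.choose r * ((n - (s+r)) + ((s+r) - n)) := by
            refine Finset.sum_congr rfl fun s _ => Finset.sum_subset hsub fun r _ hr => ?_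
            have : n < r := by simp only [mem_range, not_lt] at hr; omega
            simp [Nat.choose_eq_zero_of_lt this]
        _ = ∑ s ∈ range (2*n+1), ∑ r ∈ range (2*n+1),
              n.choose s * n.choose r * ((n - (s+r)) + ((s+r) - n)) := by
            refine Finset.sum_subset hsub fun s _ hs => ?_
            have : n < s := by simp only [mem_range, not_lt] at hs; omega
            exact Finset.sum_eq_zero fun r _ => by simp [Nat.choose_eq_zero_of_lt this]
    have rhs_eq : ∑ k ∈ range (2*n+1), (2*n).choose k * ((n - k) + (k - n))
        = ∑ s ∈ range (2*n+1), ∑ r ∈ range (2*n+1),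
          n.choose s * n.choose r * ((n - (s+r)) + ((s+r) - n)) := by
      have hrhs : ∀ k ∈ range (2*n+1), (2*n).choose k * ((n - k) + (k - n))
          = ∑ s ∈ range (2*n+1),
              (if s ≤ k then n.choose s * n.choose (k-s) * ((n - k) + (k - n)) else 0) := by
        intro k hk
        have hk' : k ≤ 2*n := by simpa [Nat.lt_succ_iff] using hk
        have hvdm : (2*n).choose k = ∑ s ∈ range (k+1), n.choose s * n.choose (k-s) := by
          rw [two_mul, Nat.add_choose_eq, Finset.Nat.sum_antidiagonal_eq_sum_range_succ_mk]
        rw [hvdm, Finset.sum_mul, sum_range_le_filter hk']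
      calc ∑ k ∈ range (2*n+1), (2*n).choose k * ((n - k) + (k - n))
          = ∑ k ∈ range (2*n+1), ∑ s ∈ range (2*n+1),
              (if s ≤ k then n.choose s * n.choose (k-s) * ((n - k) + (k - n)) else 0) :=
            Finset.sum_congr rfl hrhs
        _ = ∑ s ∈ range (2*n+1), ∑ k ∈ range (2*n+1),
              (if s ≤ k then n.choose s * n.choose (k-s) * ((n - k) + (k - n)) else 0) :=
            Finset.sum_comm
        _ = ∑ s ∈ range (2*n+1), ∑ r ∈ range (2*n+1),
              n.choose s * n.choose r * ((n - (s+r)) + ((s+r) - n)) := by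
            refine Finset.sum_congr rfl fun s hs => ?_
            have hs' : s ≤ 2*n := by simpa [Nat.lt_succ_iff] using hs
            rw [← Finset.sum_filter]
            have hfil : (range (2*n+1)).filter (fun k => s ≤ k) = Ico s (2*n+1) := by
              ext k; simp only [mem_filter, mem_range, mem_Ico]; omega
            rw [hfil, Finset.sum_Ico_eq_sum_range]
            have hc : ∀ q ∈ range (2*n+1-s),
                n.choose s * n.choose ((s+q)-s) * ((n - (s+q)) + ((s+q) - n))
                = n.choose s * n.choose q * ((n - (s+q)) + ((s+q) - n)) := by
              intro q _
              rw [show (s+q)-s = q by omega]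
            rw [Finset.sum_congr rfl hc]
            refine Finset.sum_subset (Finset.range_subset_range.mpr (by omega)) fun q hq hq' => ?_
            have h1 : q ≤ 2*n := by simp only [mem_range, Nat.lt_succ_iff] at hq; omega
            have h2 : 2*n+1-s ≤ q := by simp only [mem_range, not_lt] at hq'; omega
            have : n < s ∨ n < q := by omega
            rcases this with h | h <;> simp [Nat.choose_eq_zero_of_lt h]
    rw [lhs_eq, rhs_eq]
  have step5 : ∑ k ∈ range (2*n+1), (2*n).choose k * ((n - k) + (k - n))
      = 2 * ∑ k ∈ range n, (n - k) * ((2*n).choose k) := by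
    have hsplit : ∑ k ∈ range (2*n+1), (2*n).choose k * ((n - k) + (k - n))
        = (∑ k ∈ range (2*n+1), (2*n).choose k * (n - k))
          + ∑ k ∈ range (2*n+1), (2*n).choose k * (k - n) := by
      rw [← Finset.sum_add_distrib]
      exact Finset.sum_congr rfl fun k _ => by ring
    have hrefl : ∑ k ∈ range (2*n+1), (2*n).choose k * (k - n)
        = ∑ k ∈ range (2*n+1), (2*n).choose k * (n - k) := by
      rw [← Finset.sum_range_reflect (fun k => (2*n).choose k * (k - n)) (2*n+1)]
      refine Finset.sum_congr rfl fun k hk => ?_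
      have hk' : k ≤ 2*n := by simpa [Nat.lt_succ_iff] using hk
      rw [show 2*n+1-1-k = 2*n-k by omega, Nat.choose_symm hk']
      congr 1
      omega
    have hres : ∑ k ∈ range n, (2*n).choose k * (n - k)
        = ∑ k ∈ range (2*n+1), (2*n).choose k * (n - k) := by
      refine Finset.sum_subset (Finset.range_subset_range.mpr (by omega)) fun k _ hk => ?_
      have : n ≤ k := by simp only [mem_range, not_lt] at hk; exact hk
      simp [Nat.sub_eq_zero_of_le this]
    rw [hsplit, hrefl, ← two_mul, ← hres]
    congr 1
    exact Finset.sum_congr rfl fun k _ => mul_comm _ _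
  rw [step1, step23, step4, step5]
  rcases n with _ | m
  · simp
  · exact telescope m


open Finset

/-- Sum over tuples of a product over coordinates factorizes. -/
private lemma sum_tuple_prod {X : Type*} [Fintype X] [DecidableEq X] (N : ℕ)
    (f : Fin N → X → ℝ) :
    ∑ z : Fin N → X, ∏ i, f i (z i) = ∏ i, ∑ u, f i u :=
  (Fintype.prod_sum f).symm

private lemma sum_tuple_single {X : Type*} [Fintype X] [DecidableEq X] {N : ℕ}
    (j : Fin N) (F : X → ℝ) :
    ∑ z : Fin N → X, F (z j) = (Fintype.card X : ℝ) ^ (N - 1) * ∑ u, F u := by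
  have h : ∀ z : Fin N → X, F (z j) = ∏ i, (if i = j then F (z i) else 1) := by
    intro z
    rw [Finset.prod_ite_eq' Finset.univ j (fun i => F (z i))]
    simp
  calc ∑ z : Fin N → X, F (z j) = ∑ z : Fin N → X, ∏ i, (if i = j then F (z i) else 1) := by
        exact Finset.sum_congr rfl fun z _ => h z
    _ = ∏ i, ∑ u, (if i = j then F u else 1) := by
        rw [← sum_tuple_prod N (fun i u => if i = j then F u else 1)]
    _ = ∏ i, (if i = j then ∑ u, F u else (Fintype.card X : ℝ)) := by
        refine Finset.prod_congr rfl fun i _ => ?_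
        split_ifs <;> simp [Finset.card_univ]
    _ = (∑ u, F u) * ∏ i ∈ Finset.univ.erase j, (if i = j then ∑ u, F u else (Fintype.card X : ℝ)) := by
        rw [← Finset.mul_prod_erase Finset.univ _ (Finset.mem_univ j), if_pos rfl]
    _ = (Fintype.card X : ℝ) ^ (N - 1) * ∑ u, F u := by
        rw [Finset.prod_congr rfl (fun i hi => if_neg (Finset.mem_erase.mp hi).1),
          Finset.prod_const, Finset.card_erase_of_mem (Finset.mem_univ j), Finset.card_univ,
          Fintype.card_fin, mul_comm]

private lemma sum_tuple_pair {X : Type*} [Fintype X] [DecidableEq X] {N : ℕ}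
    {j k : Fin N} (hjk : j ≠ k) (F : X → ℝ) (hF : ∑ u, F u = 0) :
    ∑ z : Fin N → X, F (z j) * F (z k) = 0 := by
  have h : ∀ z : Fin N → X,
      F (z j) * F (z k) = ∏ i, (if i = j then F (z i) else if i = k then F (z i) else 1) := by
    intro z
    rw [← Finset.mul_prod_erase Finset.univ _ (Finset.mem_univ j)]
    rw [← Finset.mul_prod_erase (Finset.univ.erase j) _
      (Finset.mem_erase.mpr ⟨Ne.symm hjk, Finset.mem_univ k⟩)]
    rw [if_pos rfl, if_neg (Ne.symm hjk), if_pos rfl]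
    rw [Finset.prod_eq_one fun i hi => ?_]
    · ring
    · have h1 := (Finset.mem_erase.mp hi).1
      have h2 := (Finset.mem_erase.mp (Finset.mem_erase.mp hi).2).1
      rw [if_neg h2, if_neg h1]
  rw [Finset.sum_congr rfl fun z _ => h z,
    sum_tuple_prod N (fun i u => if i = j then F u else if i = k then F u else 1)]
  refine Finset.prod_eq_zero (Finset.mem_univ j) ?_
  simp [hF]

/-- variance computation for mean-zero `h` -/
private lemma sum_tuple_sq {X : Type*} [Fintype X] [DecidableEq X] (N : ℕ)
    (h : X → ℝ) (hsum : ∑ u, h u = 0) :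
    ∑ z : Fin N → X, (∑ j, h (z j)) ^ 2
      = N * (Fintype.card X : ℝ) ^ (N - 1) * ∑ u, (h u) ^ 2 := by
  have expand : ∀ z : Fin N → X, (∑ j, h (z j)) ^ 2 = ∑ j, ∑ k, h (z j) * h (z k) := by
    intro z
    rw [sq, Finset.sum_mul_sum]
  rw [Finset.sum_congr rfl fun z _ => expand z, Finset.sum_comm]
  have inner : ∀ j : Fin N, ∑ z : Fin N → X, ∑ k, h (z j) * h (z k)
      = (Fintype.card X : ℝ) ^ (N - 1) * ∑ u, (h u) ^ 2 := by
    intro j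
    rw [Finset.sum_comm]
    have hterm : ∀ k ∈ (Finset.univ : Finset (Fin N)), ∑ z : Fin N → X, h (z j) * h (z k)
        = if k = j then (Fintype.card X : ℝ) ^ (N - 1) * ∑ u, (h u) ^ 2 else 0 := by
      intro k _
      rcases eq_or_ne k j with rfl | hkj
      · rw [if_pos rfl]
        have : ∀ z : Fin N → X, h (z k) * h (z k) = (fun u => (h u)^2) (z k) := fun z => (sq _).symm
        rw [Finset.sum_congr rfl fun z _ => this z, sum_tuple_single k (fun u => (h u)^2)]
      · rw [if_neg hkj]
        exact sum_tuple_pair (Ne.symm hkj) h hsum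
    rw [Finset.sum_congr rfl hterm, Finset.sum_ite_eq' Finset.univ j
      (fun _ => (Fintype.card X : ℝ) ^ (N - 1) * ∑ u, (h u) ^ 2)]
    simp
  rw [Finset.sum_congr rfl fun j _ => inner j, Finset.sum_const, Finset.card_univ,
    Fintype.card_fin, nsmul_eq_mul, mul_assoc]


open Finset

private lemma hd_eq (n : ℕ) (x u : Fin n → Bool) :
    hammingDist x u = ((Finset.univ : Finset (Fin n)).filter (fun i => x i ≠ u i)).card := rfl

private lemma sphere_card (n s : ℕ) (x : Fin n → Bool) :
    ((Finset.univ : Finset (Fin n → Bool)).filter (fun u => hammingDist x u = s)).card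
      = n.choose s := by
  have h : n.choose s = (Finset.powersetCard s (Finset.univ : Finset (Fin n))).card := by
    rw [Finset.card_powersetCard, Finset.card_univ, Fintype.card_fin]
  rw [h]
  apply Finset.card_bij' (fun u _ => (Finset.univ : Finset (Fin n)).filter (fun i => x i ≠ u i))
    (fun A _ => fun i => if i ∈ A then !(x i) else x i)
  · intro u hu
    rw [Finset.mem_powersetCard_univ, ← hd_eq]
    exact (Finset.mem_filter.mp hu).2
  · intro A hA
    rw [Finset.mem_powersetCard_univ] at hA
    rw [Finset.mem_filter]
    refine ⟨Finset.mem_univ _, ?_⟩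
    rw [hd_eq, ← hA]
    congr 1
    ext i
    by_cases hi : i ∈ A <;> simp [hi]
  · intro u hu
    funext i
    by_cases hi : x i = u i <;> simp [hi]
    · cases hx : x i <;> cases hu2 : u i <;> simp_all
  · intro A hA
    ext i
    simp only [Finset.mem_filter, Finset.mem_univ, true_and]
    by_cases hi : i ∈ A <;> simp [hi]

private lemma ball_card (n t : ℕ) (x : Fin n → Bool) :
    ((Finset.univ : Finset (Fin n → Bool)).filter (fun u => hammingDist x u ≤ t)).card
      = ∑ s ∈ range (t+1), n.choose s := by
  rw [Finset.card_eq_sum_card_fiberwise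
    (f := fun u => hammingDist x u) (t := range (t+1))
    (fun u hu => Finset.mem_range.mpr (Nat.lt_succ_of_le (Finset.mem_filter.mp hu).2))]
  refine Finset.sum_congr rfl fun s hs => ?_
  have hs' : s ≤ t := by simpa [Nat.lt_succ_iff] using hs
  rw [Finset.filter_filter, ← sphere_card n s x]
  congr 1
  ext u
  simp only [Finset.mem_filter, Finset.mem_univ, true_and]
  constructor
  · exact fun h => h.2
  · exact fun h => ⟨h ▸ hs', h⟩


open Finset


private lemma discInnerSum (n N : ℕ) (hN : 1 ≤ N) (t : ℕ) (x : Fin n → Bool) :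
    ∑ z : Fin N → (Fin n → Bool),
      ((N : ℝ)⁻¹ * ∑ j : Fin N, (if hammingDist x (z j) ≤ t then (1 : ℝ) else 0)
        - ((2 : ℝ) ^ n)⁻¹ *
            ((Finset.univ.filter (fun u : Fin n → Bool => hammingDist x u ≤ t)).card : ℝ)) ^ 2
    = ((2:ℝ)^n)^(N-1) / N *
        (((Finset.univ.filter (fun u : Fin n → Bool => hammingDist x u ≤ t)).card : ℝ)
          - ((Finset.univ.filter (fun u : Fin n → Bool => hammingDist x u ≤ t)).card : ℝ)^2
            / 2^n) := by
  classical
  have hN0 : (N:ℝ) ≠ 0 := Nat.cast_ne_zero.mpr (by omega)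
  have hM0 : ((2:ℝ)^n) ≠ 0 := by positivity
  have hcardX : (Fintype.card (Fin n → Bool) : ℝ) = 2^n := by
    rw [Fintype.card_fun, Fintype.card_bool, Fintype.card_fin]
    push_cast
    ring
  set c : ℝ := ((Finset.univ.filter (fun u : Fin n → Bool => hammingDist x u ≤ t)).card : ℝ)
    with hc
  set μ : ℝ := ((2:ℝ)^n)⁻¹ * c with hμ
  set h : (Fin n → Bool) → ℝ := fun u => (if hammingDist x u ≤ t then (1:ℝ) else 0) - μ with hh
  have hgsum : ∑ u : Fin n → Bool, (if hammingDist x u ≤ t then (1:ℝ) else 0) = c :=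
    Finset.sum_boole _ _
  have hhsum : ∑ u, h u = 0 := by
    simp only [hh]
    rw [Finset.sum_sub_distrib, hgsum, Finset.sum_const, Finset.card_univ, nsmul_eq_mul, hcardX,
      hμ]
    field_simp
    ring
  have hsq : ∑ u, (h u)^2 = c - c^2 / 2^n := by
    have hterm : ∀ u, (h u)^2
        = (if hammingDist x u ≤ t then (1:ℝ) else 0)
          - 2*μ*(if hammingDist x u ≤ t then (1:ℝ) else 0) + μ^2 := by
      intro u
      simp only [hh]
      split_ifs <;> ring
    rw [Finset.sum_congr rfl fun u _ => hterm u, Finset.sum_add_distrib,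
      Finset.sum_sub_distrib, ← Finset.mul_sum, hgsum, Finset.sum_const, Finset.card_univ,
      nsmul_eq_mul, hcardX, hμ]
    field_simp
    ring
  have hrw : ∀ z : Fin N → (Fin n → Bool),
      ((N : ℝ)⁻¹ * ∑ j : Fin N, (if hammingDist x (z j) ≤ t then (1 : ℝ) else 0) - μ)^2
        = ((N:ℝ)⁻¹)^2 * (∑ j, h (z j))^2 := by
    intro z
    have hz : ∑ j : Fin N, h (z j)
        = (∑ j : Fin N, if hammingDist x (z j) ≤ t then (1:ℝ) else 0) - N * μ := by
      simp only [hh]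
      rw [Finset.sum_sub_distrib, Finset.sum_const, Finset.card_univ, Fintype.card_fin,
        nsmul_eq_mul]
    rw [hz]
    field_simp
  rw [Finset.sum_congr rfl fun z _ => hrw z, ← Finset.mul_sum,
    sum_tuple_sq N h hhsum, hcardX, hsq]
  field_simp


/-- The quadratic discrepancy of an `N`-tuple of points of `{0,1}^n`. -/
noncomputable def discTuple (n N : ℕ) (z : Fin N → (Fin n → Bool)) : ℝ :=
  ∑ t ∈ Finset.range (n + 1), ∑ x : Fin n → Bool,
    ((N : ℝ)⁻¹ * ∑ j : Fin N, (if hammingDist x (z j) ≤ t then (1 : ℝ) else 0)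
      - ((2 : ℝ) ^ n)⁻¹ *
          ((Finset.univ.filter (fun u : Fin n → Bool => hammingDist x u ≤ t)).card : ℝ)) ^ 2

/-- The expected quadratic discrepancy of `N` independent uniformly random points of `{0,1}^n`
(equivalently, the average of `D^{L2}` over all `N`-tuples) equals
`(n/(N·2^{n+1}))·C(2n,n)`. -/
theorem expected_discrepancy_random_code (n N : ℕ) (hN : 1 ≤ N) :
    (Fintype.card (Fin N → (Fin n → Bool)) : ℝ)⁻¹ *
        ∑ z : Fin N → (Fin n → Bool), discTuple n N z
      = (n : ℝ) / (N * 2 ^ (n + 1)) * Nat.choose (2 * n) n := by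
  classical
  have hN0 : (N:ℝ) ≠ 0 := Nat.cast_ne_zero.mpr (by omega)
  have hM0 : ((2:ℝ)^n) ≠ 0 := by positivity
  have hcardX : (Fintype.card (Fin n → Bool) : ℝ) = 2^n := by
    rw [Fintype.card_fun, Fintype.card_bool, Fintype.card_fin]
    push_cast
    ring
  have hcardT : (Fintype.card (Fin N → (Fin n → Bool)) : ℝ) = ((2:ℝ)^n)^N := by
    rw [Fintype.card_fun, Fintype.card_fun, Fintype.card_bool, Fintype.card_fin,
      Fintype.card_fin]
    push_cast
    ring
  -- V and W
  set V : ℕ → ℕ := fun t => ∑ s ∈ range (t+1), n.choose s with hV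
  set W : ℕ → ℕ := fun t => ∑ r ∈ Ico (t+1) (n+1), n.choose r with hW
  have hVW : ∀ t, t ≤ n → V t + W t = 2^n := by
    intro t ht
    rw [hV, hW]
    simp only
    rw [Finset.sum_range_add_sum_Ico _ (by omega : t+1 ≤ n+1)]
    exact Nat.sum_range_choose n
  have hcomb : 2 * ∑ t ∈ range (n+1), V t * W t = n * ((2*n).choose n) := comb_main n
  -- unfold and swap sums
  simp only [discTuple]
  rw [Finset.sum_comm]
  have h1 : ∀ t ∈ range (n+1),
      (∑ z : Fin N → (Fin n → Bool), ∑ x : Fin n → Bool,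
        ((N : ℝ)⁻¹ * ∑ j : Fin N, (if hammingDist x (z j) ≤ t then (1 : ℝ) else 0)
          - ((2 : ℝ) ^ n)⁻¹ *
              ((Finset.univ.filter (fun u : Fin n → Bool => hammingDist x u ≤ t)).card : ℝ)) ^ 2)
      = ((V t * W t : ℕ) : ℝ) * (((2:ℝ)^n)^(N-1) / N) := by
    intro t ht
    have ht' : t ≤ n := by simpa [Nat.lt_succ_iff] using ht
    rw [Finset.sum_comm]
    have h2 : ∀ x : Fin n → Bool,
        (∑ z : Fin N → (Fin n → Bool),
          ((N : ℝ)⁻¹ * ∑ j : Fin N, (if hammingDist x (z j) ≤ t then (1 : ℝ) else 0)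
            - ((2 : ℝ) ^ n)⁻¹ *
                ((Finset.univ.filter (fun u : Fin n → Bool => hammingDist x u ≤ t)).card : ℝ)) ^ 2)
        = ((2:ℝ)^n)^(N-1) / N * (((V t : ℕ):ℝ) - ((V t : ℕ):ℝ)^2 / 2^n) := by
      intro x
      rw [discInnerSum n N hN t x, ball_card n t x]
    rw [Finset.sum_congr rfl fun x _ => h2 x, Finset.sum_const, Finset.card_univ, nsmul_eq_mul,
      hcardX]
    -- now algebra: 2^n * (A * (V - V²/2ⁿ)) = (V*W) * A  with V + W = 2ⁿ
    have hvw : ((V t : ℕ):ℝ) + ((W t : ℕ):ℝ) = 2^n := by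
      exact_mod_cast hVW t ht'
    have hWr : ((W t : ℕ):ℝ) = 2^n - ((V t : ℕ):ℝ) := by linarith
    push_cast
    rw [hWr]
    field_simp
  rw [Finset.sum_congr rfl h1, ← Finset.sum_mul, hcardT]
  have hcombR : 2 * (∑ t ∈ range (n+1), ((V t * W t : ℕ) : ℝ)) = (n:ℝ) * ((2*n).choose n : ℝ) := by
    exact_mod_cast hcomb
  have hSval : (∑ t ∈ range (n+1), ((V t * W t : ℕ) : ℝ))
      = (n:ℝ) * ((2*n).choose n : ℝ) / 2 := by linarith
  have hpow : ((2:ℝ)^n)^N = ((2:ℝ)^n)^(N-1) * (2:ℝ)^n := by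
    rw [← pow_succ]
    congr 1
    omega
  have h2n1 : (2:ℝ)^(n+1) = (2:ℝ)^n * 2 := pow_succ 2 n
  rw [hSval, hpow, h2n1]
  have hMN0 : ((2:ℝ)^n)^(N-1) ≠ 0 := by positivity
  field_simp
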